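/- Let L be a complete enriched Lie algebra with dim L/L^{(2)} < ∞. Then the lower central series and the closed lower central series coincide: L^k = L^{(k)} for all k ≥ 1. In particular each [L, L^{(k-1)}] contains L^{(k)}. -/

import Mathlib

section EnrichedPre

variable {L : Type*} [LieRing L] [LieAlgebra ℚ L]

/-- `lcsIn A n` is the span of iterated Lie brackets of length `n+1` with entries in `A`
(so `lcsIn ⊤ (k-1)` is the `k`-th term `L^k` of the lower central series). -/
def lcsIn (A : Submodule ℚ L) : ℕ → Submodule ℚ L
  | 0 => A
  | n + 1 => Submodule.span ℚ {z : L | ∃ x ∈ A, ∃ y ∈ lcsIn A n, ⁅x, y⁆ = z}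

/-- The closure of a subspace `S` in an enriched Lie algebra `(L, {I α})`:
the set of limits of coherent families of elements of `S`, i.e. of those `x`
whose image in each `L ⧸ I α` lies in the image of `S`. -/
def encl {ι : Type*} (I : ι → LieIdeal ℚ L) (S : Submodule ℚ L) : Submodule ℚ L where
  carrier := {x : L | ∀ α, ∃ s ∈ S, x - s ∈ (I α : Submodule ℚ L)}
  add_mem' := by
    intro a b ha hb α
    obtain ⟨s, hs, h1⟩ := ha α
    obtain ⟨t, ht, h2⟩ := hb α
    exact ⟨s + t, S.add_mem hs ht, by
      simpa [add_sub_add_comm] using Submodule.add_mem _ h1 h2⟩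
  zero_mem' := fun α => ⟨0, S.zero_mem, by simp⟩
  smul_mem' := by
    intro c a ha α
    obtain ⟨s, hs, h1⟩ := ha α
    exact ⟨c • s, S.smul_mem c hs, by
      simpa [smul_sub] using Submodule.smul_mem _ c h1⟩

/-- `(L, {I α})` is an enriched Lie algebra: a directed family of ideals with
finite-dimensional nilpotent quotients and trivial intersection. -/
def IsEnriched {ι : Type*} (I : ι → LieIdeal ℚ L) : Prop :=
  (∀ α β, ∃ γ, I γ ≤ I α ⊓ I β) ∧
  (∀ α, FiniteDimensional ℚ (L ⧸ I α)) ∧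
  (∀ α, LieRing.IsNilpotent (L ⧸ I α)) ∧
  (⨅ α, I α) = ⊥

/-- Completeness of `(L, {I α})`: every coherent family in `lim_α L/I α`
(presented by compatible representatives) has a limit in `L`. -/
def IsCompleteWrt {ι : Type*} (I : ι → LieIdeal ℚ L) : Prop :=
  ∀ y : ι → L, (∀ α β, I β ≤ I α → y β - y α ∈ (I α : Submodule ℚ L)) →
    ∃ x : L, ∀ α, x - y α ∈ (I α : Submodule ℚ L)

end EnrichedPre

section Coset

variable {V : Type*} [AddCommGroup V] [Module ℚ V]

/-- A nonempty affine subset (coset of a submodule). -/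
def IsCoset (S : Set V) : Prop := ∃ p : V, ∃ W : Submodule ℚ V, S = {v | v - p ∈ W}

lemma IsCoset.nonempty {S : Set V} (h : IsCoset S) : S.Nonempty := by
  obtain ⟨p, W, rfl⟩ := h
  exact ⟨p, by simp⟩

/-- The direction of a coset. -/
def cosetDir (S : Set V) : Submodule ℚ V :=
  Submodule.span ℚ {d | ∃ a ∈ S, ∃ b ∈ S, a - b = d}

lemma cosetDir_mono {S T : Set V} (h : S ⊆ T) : cosetDir S ≤ cosetDir T :=
  Submodule.span_mono (by rintro d ⟨a, ha, b, hb, rfl⟩; exact ⟨a, h ha, b, h hb, rfl⟩)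

lemma IsCoset.eq_dir {S : Set V} (h : IsCoset S) {p : V} (hp : p ∈ S) :
    S = {v | v - p ∈ cosetDir S} := by
  obtain ⟨q, W, rfl⟩ := h
  have hdir : cosetDir {v : V | v - q ∈ W} = W := by
    apply le_antisymm
    · rw [cosetDir, Submodule.span_le]
      rintro d ⟨a, ha, b, hb, rfl⟩
      simpa using W.sub_mem ha hb
    · intro w hw
      apply Submodule.subset_span
      exact ⟨q + w, by simpa using hw, q, by simp, by abel⟩
  rw [hdir]
  ext v
  simp only [Set.mem_setOf_eq] at hp ⊢
  constructor
  · intro hv; simpa using W.sub_mem hv hp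
  · intro hv; simpa using W.add_mem hv hp

variable {V' : Type*} [AddCommGroup V'] [Module ℚ V']

lemma IsCoset.map {S : Set V} (h : IsCoset S) (f : V →ₗ[ℚ] V') : IsCoset (f '' S) := by
  obtain ⟨p, W, rfl⟩ := h
  refine ⟨f p, W.map f, ?_⟩
  ext u
  constructor
  · rintro ⟨v, hv, rfl⟩
    exact ⟨v - p, hv, by simp⟩
  · rintro ⟨w, hw, hfw⟩
    exact ⟨p + w, by simpa using hw, by rw [map_add, hfw]; abel⟩

lemma IsCoset.inter {S T : Set V} (hS : IsCoset S) (hT : IsCoset T)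
    (hne : (S ∩ T).Nonempty) : IsCoset (S ∩ T) := by
  obtain ⟨r, hrS, hrT⟩ := hne
  refine ⟨r, cosetDir S ⊓ cosetDir T, ?_⟩
  have eS := hS.eq_dir hrS
  have eT := hT.eq_dir hrT
  ext v
  simp only [Set.mem_inter_iff, Set.mem_setOf_eq, Submodule.mem_inf]
  constructor
  · rintro ⟨h1, h2⟩
    rw [eS] at h1; rw [eT] at h2
    exact ⟨h1, h2⟩
  · rintro ⟨h1, h2⟩
    exact ⟨by rw [eS]; exact h1, by rw [eT]; exact h2⟩

lemma IsCoset.preimage {S : Set V'} (h : IsCoset S) (f : V →ₗ[ℚ] V')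
    (hne : (f ⁻¹' S).Nonempty) : IsCoset (f ⁻¹' S) := by
  obtain ⟨r, hr⟩ := hne
  refine ⟨r, (cosetDir S).comap f, ?_⟩
  have eS := h.eq_dir hr
  ext v
  simp only [Set.mem_preimage, Submodule.mem_comap, Set.mem_setOf_eq, map_sub]
  constructor
  · intro hv; rw [eS] at hv; exact hv
  · intro hv; rw [eS]; exact hv

lemma IsCoset.singleton (p : V) : IsCoset ({p} : Set V) :=
  ⟨p, ⊥, by ext v; simp [sub_eq_zero]⟩

/-- A codirected nonempty family of cosets of a finite-dimensional space has a
least element. -/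
lemma exists_min_coset [FiniteDimensional ℚ V] (𝒜 : Set (Set V)) (hne : 𝒜.Nonempty)
    (hcos : ∀ S ∈ 𝒜, IsCoset S)
    (hdir : ∀ S ∈ 𝒜, ∀ T ∈ 𝒜, ∃ U ∈ 𝒜, U ⊆ S ∩ T) :
    ∃ M ∈ 𝒜, ∀ T ∈ 𝒜, M ⊆ T := by
  classical
  -- choose element of minimal direction rank
  have hex : ∃ k : ℕ, ∃ S ∈ 𝒜, Module.finrank ℚ (cosetDir S) = k := by
    obtain ⟨S, hS⟩ := hne
    exact ⟨_, S, hS, rfl⟩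
  obtain ⟨M, hM, hMrank⟩ := Nat.find_spec hex
  refine ⟨M, hM, fun T hT => ?_⟩
  obtain ⟨U, hU, hUsub⟩ := hdir M hM T hT
  have hUM : U ⊆ M := hUsub.trans Set.inter_subset_left
  have hdirle : cosetDir U ≤ cosetDir M := cosetDir_mono hUM
  have hrank : Module.finrank ℚ (cosetDir M) ≤ Module.finrank ℚ (cosetDir U) := by
    rw [hMrank]
    exact Nat.find_min' hex ⟨U, hU, rfl⟩
  have hdeq : cosetDir U = cosetDir M := Submodule.eq_of_le_of_finrank_le hdirle hrank
  obtain ⟨u, hu⟩ := (hcos U hU).nonempty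
  have h1 : M = {v | v - u ∈ cosetDir M} := (hcos M hM).eq_dir (hUM hu)
  have h2 : U = {v | v - u ∈ cosetDir U} := (hcos U hU).eq_dir hu
  have : M = U := by rw [h1, h2, hdeq]
  rw [this]
  exact hUsub.trans Set.inter_subset_right

end Coset

section LieAux

variable {L : Type*} [LieRing L] [LieAlgebra ℚ L]

lemma lie_mem_lcsIn_succ {k : ℕ} {x y : L} (hy : y ∈ lcsIn (⊤ : Submodule ℚ L) k) :
    ⁅x, y⁆ ∈ lcsIn (⊤ : Submodule ℚ L) (k + 1) :=
  Submodule.subset_span ⟨x, trivial, y, hy, rfl⟩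

lemma lcsIn_lie_mem : ∀ (k : ℕ) (x y : L), y ∈ lcsIn (⊤ : Submodule ℚ L) k →
    ⁅x, y⁆ ∈ lcsIn (⊤ : Submodule ℚ L) k := by
  intro k
  induction k with
  | zero => intro x y _; trivial
  | succ k ih =>
    intro x y hy
    induction hy using Submodule.span_induction with
    | mem z hz =>
      obtain ⟨u, -, v, hv, rfl⟩ := hz
      have h1 : ⁅x, ⁅u, v⁆⁆ = ⁅⁅x, u⁆, v⁆ + ⁅u, ⁅x, v⁆⁆ := by
        rw [lie_lie]; abel
      rw [h1]
      exact Submodule.add_mem _ (lie_mem_lcsIn_succ hv) (lie_mem_lcsIn_succ (ih x v hv))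
    | zero => simpa using Submodule.zero_mem _
    | add a b _ _ ha hb => rw [lie_add]; exact Submodule.add_mem _ ha hb
    | smul c a _ ha => rw [lie_smul]; exact Submodule.smul_mem _ c ha

lemma lcsIn_succ_le (k : ℕ) :
    lcsIn (⊤ : Submodule ℚ L) (k + 1) ≤ lcsIn (⊤ : Submodule ℚ L) k := by
  rw [lcsIn, Submodule.span_le]
  rintro z ⟨x, -, y, hy, rfl⟩
  exact lcsIn_lie_mem k x y hy

lemma lcsIn_add_le (k j : ℕ) :
    lcsIn (⊤ : Submodule ℚ L) (k + j) ≤ lcsIn (⊤ : Submodule ℚ L) k := by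
  induction j with
  | zero => exact le_rfl
  | succ j ih => exact (lcsIn_succ_le (k + j)).trans ih

lemma lcsIn_one_bracket {q : ℕ} {y z : L} (hy : y ∈ lcsIn (⊤ : Submodule ℚ L) 1)
    (hz : z ∈ lcsIn (⊤ : Submodule ℚ L) q) :
    ⁅y, z⁆ ∈ lcsIn (⊤ : Submodule ℚ L) (q + 2) := by
  induction hy using Submodule.span_induction with
  | mem w hw =>
    obtain ⟨u, -, v, -, rfl⟩ := hw
    rw [lie_lie]
    refine Submodule.sub_mem _ ?_ ?_
    · exact lie_mem_lcsIn_succ (lie_mem_lcsIn_succ hz)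
    · exact lie_mem_lcsIn_succ (lie_mem_lcsIn_succ hz)
  | zero => simpa using Submodule.zero_mem _
  | add a b _ _ ha hb => rw [add_lie]; exact Submodule.add_mem _ ha hb
  | smul c a _ ha => rw [smul_lie]; exact Submodule.smul_mem _ c ha

/-- `lcsIn ⊤` agrees with the mathlib lower central series. -/
lemma lcsIn_eq_lowerCentralSeries : ∀ k : ℕ,
    lcsIn (⊤ : Submodule ℚ L) k = LieSubmodule.toSubmodule (LieModule.lowerCentralSeries ℚ L L k) := by
  intro k
  induction k with
  | zero => simp [lcsIn]
  | succ k ih =>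
    rw [lcsIn, LieModule.lowerCentralSeries_succ, LieSubmodule.lieIdeal_oper_eq_linear_span']
    congr 1
    ext z
    constructor
    · rintro ⟨x, -, y, hy, rfl⟩
      exact ⟨x, trivial, y, by rw [← LieSubmodule.mem_toSubmodule, ← ih]; exact hy, rfl⟩
    · rintro ⟨x, -, y, hy, rfl⟩
      exact ⟨x, trivial, y, by rw [ih, LieSubmodule.mem_toSubmodule]; exact hy, rfl⟩

/-- In a nilpotent Lie algebra, the lower central series eventually vanishes. -/
lemma lcsIn_eventually_bot [LieRing.IsNilpotent L] :
    ∃ N : ℕ, lcsIn (⊤ : Submodule ℚ L) N = ⊥ := by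
  obtain ⟨N, hN⟩ := LieModule.IsNilpotent.nilpotent ℚ L L
  exact ⟨N, by rw [lcsIn_eq_lowerCentralSeries, hN]; rfl⟩

lemma sum_lie' {κ : Type*} (s : Finset κ) (f : κ → L) (y : L) :
    ⁅∑ i ∈ s, f i, y⁆ = ∑ i ∈ s, ⁅f i, y⁆ := by
  induction s using Finset.cons_induction with
  | empty => simp
  | cons a s ha ih => rw [Finset.sum_cons, Finset.sum_cons, add_lie, ih]

variable (L) in
/-- The linear map `z ↦ ∑ i, ⁅v i, z i⁆`. -/
def bsum {n : ℕ} (v : Fin n → L) : (Fin n → L) →ₗ[ℚ] L where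
  toFun z := ∑ i, ⁅v i, z i⁆
  map_add' z w := by simp [lie_add, Finset.sum_add_distrib]
  map_smul' c z := by simp [Finset.smul_sum]

@[simp] lemma bsum_apply {n : ℕ} (v : Fin n → L) (z : Fin n → L) :
    bsum L v z = ∑ i, ⁅v i, z i⁆ := rfl

/-- Generation lemma: in a nilpotent Lie algebra, if `v` spans `L` modulo `L^{(2)}`,
then `lcsIn ⊤ (m+1) = ∑ᵢ ⁅v i, lcsIn ⊤ m⁆`. -/
lemma lcsIn_succ_eq_bsum [LieRing.IsNilpotent L] {n : ℕ} (v : Fin n → L)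
    (hv : ∀ u : L, ∃ c : Fin n → ℚ, u - ∑ i, c i • v i ∈ lcsIn (⊤ : Submodule ℚ L) 1)
    (m : ℕ) {y : L} (hy : y ∈ lcsIn (⊤ : Submodule ℚ L) (m + 1)) :
    ∃ z : Fin n → L, (∀ i, z i ∈ lcsIn (⊤ : Submodule ℚ L) m) ∧ y = ∑ i, ⁅v i, z i⁆ := by
  set T : ℕ → Submodule ℚ L := fun r =>
    Submodule.map (bsum L v) (Submodule.pi Set.univ fun _ => lcsIn (⊤ : Submodule ℚ L) r)
    with hT
  have hTanti : ∀ r j : ℕ, T (r + j) ≤ T r := by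
    intro r j
    exact Submodule.map_mono (fun z hz => by
      simp only [Submodule.mem_pi] at hz ⊢
      exact fun i hi => lcsIn_add_le r j (hz i hi))
  have hstep : ∀ r : ℕ, lcsIn (⊤ : Submodule ℚ L) (r + 1) ≤ T r ⊔ lcsIn (⊤ : Submodule ℚ L) (r + 2) := by
    intro r
    rw [lcsIn, Submodule.span_le]
    rintro w ⟨u, -, y', hy', rfl⟩
    obtain ⟨c, hc⟩ := hv u
    have hsum : ∑ i, ⁅v i, c i • y'⁆ = ⁅∑ i, c i • v i, y'⁆ := by
      rw [sum_lie']
      exact Finset.sum_congr rfl fun i _ => by rw [lie_smul, smul_lie]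
    have hdecomp : ⁅u, y'⁆ = (∑ i, ⁅v i, c i • y'⁆) + ⁅u - ∑ i, c i • v i, y'⁆ := by
      rw [hsum, sub_lie]; abel
    rw [hdecomp]
    refine Submodule.add_mem _ (Submodule.mem_sup_left ?_) (Submodule.mem_sup_right ?_)
    · refine ⟨fun i => c i • y', ?_, rfl⟩
      simp only [SetLike.mem_coe, Submodule.mem_pi]
      exact fun i _ => Submodule.smul_mem _ _ hy'
    · exact lcsIn_one_bracket hc hy'
  have hTle : ∀ r : ℕ, T r ≤ lcsIn (⊤ : Submodule ℚ L) (r + 1) := by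
    rintro r w ⟨z, hz, rfl⟩
    simp only [SetLike.mem_coe, Submodule.mem_pi] at hz
    show ∑ i, ⁅v i, z i⁆ ∈ _
    exact Submodule.sum_mem _ fun i _ => lie_mem_lcsIn_succ (hz i trivial)
  have hiter : ∀ j r : ℕ, lcsIn (⊤ : Submodule ℚ L) (r + 1) ≤ T r ⊔ lcsIn (⊤ : Submodule ℚ L) (r + 1 + j) := by
    intro j
    induction j with
    | zero => exact fun r => le_sup_right
    | succ j ih =>
      intro r
      refine (ih r).trans (sup_le le_sup_left ?_)
      have h1 := hstep (r + j)
      have e1 : r + 1 + j = (r + j) + 1 := by omega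
      have e2 : r + 1 + (j + 1) = (r + j) + 2 := by omega
      rw [e1, e2]
      exact h1.trans (sup_le ((hTanti r j).trans le_sup_left) le_sup_right)
  obtain ⟨N, hN⟩ := lcsIn_eventually_bot (L := L)
  have hbot : lcsIn (⊤ : Submodule ℚ L) (m + 1 + N) ≤ ⊥ := by
    have h := lcsIn_add_le (L := L) N (m + 1)
    rw [show N + (m + 1) = m + 1 + N by omega] at h
    exact hN ▸ h
  have hfin : lcsIn (⊤ : Submodule ℚ L) (m + 1) ≤ T m :=
    (hiter N m).trans (sup_le le_rfl (hbot.trans bot_le))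
  obtain ⟨z, hz, hzeq⟩ := hfin hy
  simp only [SetLike.mem_coe, Submodule.mem_pi] at hz
  exact ⟨z, fun i => hz i trivial, hzeq.symm⟩

end LieAux

section MapAux

variable {L : Type*} [LieRing L] [LieAlgebra ℚ L]

/-- The quotient map `L → L ⧸ I'` as a linear map, valued in the Lie quotient. -/
def lieMkQ (I' : LieIdeal ℚ L) : L →ₗ[ℚ] L ⧸ I' :=
  (LieSubmodule.toSubmodule I').mkQ

@[simp] lemma lieMkQ_apply (I' : LieIdeal ℚ L) (a : L) :
    lieMkQ I' a = Submodule.Quotient.mk a := rfl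

lemma lieMkQ_surjective (I' : LieIdeal ℚ L) : Function.Surjective (lieMkQ I') :=
  Submodule.mkQ_surjective _

lemma lieMkQ_bracket (I' : LieIdeal ℚ L) (a b : L) :
    lieMkQ I' ⁅a, b⁆ = ⁅lieMkQ I' a, lieMkQ I' b⁆ := rfl

lemma lieMkQ_eq_iff (I' : LieIdeal ℚ L) (a b : L) :
    lieMkQ I' a = lieMkQ I' b ↔ a - b ∈ LieSubmodule.toSubmodule I' :=
  Submodule.Quotient.eq _

lemma lieMkQ_eq_zero_iff (I' : LieIdeal ℚ L) (a : L) :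
    lieMkQ I' a = 0 ↔ a ∈ LieSubmodule.toSubmodule I' :=
  Submodule.Quotient.mk_eq_zero _

lemma lcsIn_map_lieMkQ (I' : LieIdeal ℚ L) : ∀ k : ℕ,
    Submodule.map (lieMkQ I') (lcsIn (⊤ : Submodule ℚ L) k)
      = lcsIn (⊤ : Submodule ℚ (L ⧸ I')) k := by
  intro k
  induction k with
  | zero =>
    show Submodule.map _ ⊤ = ⊤
    rw [Submodule.map_top, LinearMap.range_eq_top.mpr (lieMkQ_surjective I')]
  | succ k ih =>
    show Submodule.map _ (Submodule.span ℚ _) = Submodule.span ℚ _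
    rw [Submodule.map_span]
    congr 1
    ext z
    constructor
    · rintro ⟨w, ⟨a, -, b, hb, rfl⟩, rfl⟩
      refine ⟨lieMkQ I' a, trivial, lieMkQ I' b, ?_, (lieMkQ_bracket I' a b).symm⟩
      rw [← ih]
      exact Submodule.mem_map_of_mem hb
    · rintro ⟨xq, -, yq, hyq, rfl⟩
      rw [← ih] at hyq
      obtain ⟨b, hb, rfl⟩ := hyq
      obtain ⟨a, rfl⟩ := lieMkQ_surjective I' xq
      exact ⟨⁅a, b⁆, ⟨a, trivial, b, hb, rfl⟩, lieMkQ_bracket I' a b⟩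

lemma exists_bracket_approx {n : ℕ} (x_ : Fin n → L) (I' : LieIdeal ℚ L)
    [LieRing.IsNilpotent (L ⧸ I')] (Q1 : Submodule ℚ L)
    (hQ1 : ∀ q ∈ Q1, ∃ t ∈ lcsIn (⊤ : Submodule ℚ L) 1,
      q - t ∈ LieSubmodule.toSubmodule I')
    (hx : ∀ u : L, ∃ c : Fin n → ℚ, u - ∑ i, c i • x_ i ∈ Q1)
    (m : ℕ) {s : L} (hs : s ∈ lcsIn (⊤ : Submodule ℚ L) (m + 1)) :
    ∃ z : Fin n → L, (∀ i, z i ∈ lcsIn (⊤ : Submodule ℚ L) m) ∧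
      s - ∑ i, ⁅x_ i, z i⁆ ∈ LieSubmodule.toSubmodule I' := by
  classical
  set π := lieMkQ I' with hπ
  have hv : ∀ u : L ⧸ I', ∃ c : Fin n → ℚ,
      u - ∑ i, c i • π (x_ i) ∈ lcsIn (⊤ : Submodule ℚ (L ⧸ I')) 1 := by
    intro u
    obtain ⟨w, rfl⟩ := lieMkQ_surjective I' u
    obtain ⟨c, hc⟩ := hx w
    obtain ⟨t, ht, htI⟩ := hQ1 _ hc
    refine ⟨c, ?_⟩
    have h1 : π w - ∑ i, c i • π (x_ i) = π (w - ∑ i, c i • x_ i) := by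
      rw [map_sub, map_sum]
      simp only [map_smul]
    rw [h1, show π (w - ∑ i, c i • x_ i) = π t from (lieMkQ_eq_iff I' _ _).mpr htI,
      ← lcsIn_map_lieMkQ]
    exact Submodule.mem_map_of_mem ht
  have hsq : π s ∈ lcsIn (⊤ : Submodule ℚ (L ⧸ I')) (m + 1) := by
    rw [← lcsIn_map_lieMkQ]
    exact Submodule.mem_map_of_mem hs
  obtain ⟨zq, hzq, hseq⟩ := lcsIn_succ_eq_bsum (fun i => π (x_ i)) hv m hsq
  have hlift : ∀ i, ∃ z : L, z ∈ lcsIn (⊤ : Submodule ℚ L) m ∧ π z = zq i := by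
    intro i
    have h := hzq i
    rw [← lcsIn_map_lieMkQ] at h
    obtain ⟨z, hz, hz2⟩ := h
    exact ⟨z, hz, hz2⟩
  choose z hz hπz using hlift
  refine ⟨z, hz, ?_⟩
  rw [← lieMkQ_eq_zero_iff]
  have h2 : π (s - ∑ i, ⁅x_ i, z i⁆) = π s - ∑ i, ⁅π (x_ i), π (z i)⁆ := by
    rw [map_sub, map_sum]
    exact congrArg _ (Finset.sum_congr rfl fun i _ => lieMkQ_bracket I' _ _)
  rw [h2]
  simp only [hπz]
  rw [hseq]
  simp

end MapAux

section InvLim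

variable {ι : Type*} {V : ι → Type*} [∀ α, AddCommGroup (V α)] [∀ α, Module ℚ (V α)]

lemma invlim_coset [∀ α, FiniteDimensional ℚ (V α)] (r : ι → ι → Prop)
    (hrefl : ∀ α, r α α)
    (htrans : ∀ {α β γ}, r β α → r γ β → r γ α)
    (hdir : ∀ α β, ∃ γ, r γ α ∧ r γ β)
    (f : ∀ α β, r β α → (V β →ₗ[ℚ] V α))
    (hfrefl : ∀ (α) (h : r α α) (c), f α α h c = c)
    (hfcomp : ∀ (α β γ) (h1 : r β α) (h2 : r γ β) (h3 : r γ α) (c),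
      f α β h1 (f β γ h2 c) = f α γ h3 c)
    (Ab : ∀ α, Set (V α)) (hAbcoset : ∀ α, IsCoset (Ab α))
    (hAbcoh : ∀ (α β) (h : r β α), ∀ c ∈ Ab β, f α β h c ∈ Ab α) :
    ∃ c : ∀ α, V α, (∀ α, c α ∈ Ab α) ∧ ∀ (α β) (h : r β α), f α β h (c β) = c α := by
  classical
  let sec : Set (Σ α, V α) → ∀ α, Set (V α) := fun B α => {v | (⟨α, v⟩ : Σ α, V α) ∈ B}
  let Good : Set (Σ α, V α) → Prop := fun B =>
    (∀ α, IsCoset (sec B α)) ∧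
    (∀ α, sec B α ⊆ Ab α) ∧
    (∀ (α β) (h : r β α), ∀ v ∈ sec B β, f α β h v ∈ sec B α)
  -- Zorn's lemma: there is a minimal good subset
  have hchain : ∀ ch ⊆ {B | Good B}, IsChain (· ⊆ ·) ch → ch.Nonempty →
      ∃ lb ∈ {B | Good B}, ∀ s ∈ ch, lb ⊆ s := by
    intro ch hch hchain hne
    have hsec_inter : ∀ α, sec (⋂₀ ch) α = ⋂ B ∈ ch, sec B α := by
      intro α; ext v
      simp only [sec, Set.mem_setOf_eq, Set.mem_sInter, Set.mem_iInter]
    refine ⟨⋂₀ ch, ⟨?_, ?_, ?_⟩, fun s hs => Set.sInter_subset_of_mem hs⟩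
    · intro α
      obtain ⟨M, hMmem, hMsub⟩ := exists_min_coset ((fun B => sec B α) '' ch)
        (hne.image _) (by rintro S ⟨B, hB, rfl⟩; exact (hch hB).1 α)
        (by
          rintro S ⟨B1, hB1, rfl⟩ T ⟨B2, hB2, rfl⟩
          rcases hchain.total hB1 hB2 with h | h
          · exact ⟨sec B1 α, ⟨B1, hB1, rfl⟩,
              Set.subset_inter (Set.Subset.refl _) (fun v hv => h hv)⟩
          · exact ⟨sec B2 α, ⟨B2, hB2, rfl⟩,
              Set.subset_inter (fun v hv => h hv) (Set.Subset.refl _)⟩)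
      have heq : sec (⋂₀ ch) α = M := by
        obtain ⟨B0, hB0, rfl⟩ := hMmem
        apply Set.Subset.antisymm
        · rw [hsec_inter]
          exact Set.iInter₂_subset B0 hB0
        · rw [hsec_inter]
          exact Set.subset_iInter₂ fun B hB => hMsub _ ⟨B, hB, rfl⟩
      rw [heq]
      obtain ⟨B0, hB0, rfl⟩ := hMmem
      exact (hch hB0).1 α
    · intro α
      obtain ⟨B0, hB0⟩ := hne
      refine fun v hv => (hch hB0).2.1 α ?_
      rw [hsec_inter] at hv
      exact Set.mem_iInter₂.mp hv B0 hB0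
    · intro α β h v hv
      rw [hsec_inter] at hv ⊢
      rw [Set.mem_iInter₂] at hv ⊢
      intro B hB
      exact (hch hB).2.2 α β h v (hv B hB)
  have hB0 : Good {ω : Σ α, V α | ω.2 ∈ Ab ω.1} := by
    refine ⟨fun α => hAbcoset α, fun α v hv => hv, fun α β h v hv => hAbcoh α β h v hv⟩
  obtain ⟨Bstar, -, hBmin⟩ := zorn_superset_nonempty {B | Good B} hchain _ hB0
  have hGood : Good Bstar := hBmin.1
  obtain ⟨hG1, hG2, hG3⟩ := hGood
  -- transition maps are surjective on the minimal family
  have hsurj : ∀ (α β) (h : r β α), sec Bstar α ⊆ f α β h '' sec Bstar β := by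
    intro α' β' h' v hv
    set B' : Set (Σ α, V α) :=
      {ω | ω.2 ∈ ⋂ (β) (h : r β ω.1), f ω.1 β h '' sec Bstar β} with hB'def
    have hsecB' : ∀ α, sec B' α = ⋂ (β) (h : r β α), f α β h '' sec Bstar β := fun α => rfl
    have hB'sub : B' ⊆ Bstar := by
      rintro ⟨a, v⟩ hv
      have h1 : v ∈ f a a (hrefl a) '' sec Bstar a := by
        have := Set.mem_iInter.mp (Set.mem_iInter.mp hv a) (hrefl a)
        exact this
      obtain ⟨u, hu, rfl⟩ := h1
      rw [hfrefl]
      exact hu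
    have hGoodB' : Good B' := by
      refine ⟨?_, fun α => (fun v hv => hG2 α (hB'sub hv)), ?_⟩
      · intro α
        obtain ⟨M, hMmem, hMsub⟩ := exists_min_coset
          {S | ∃ (β : ι) (h : r β α), S = f α β h '' sec Bstar β}
          ⟨_, α, hrefl α, rfl⟩
          (by rintro S ⟨β, h, rfl⟩; exact (hG1 β).map (f α β h))
          (by
            rintro S ⟨β1, h1, rfl⟩ T ⟨β2, h2, rfl⟩
            obtain ⟨γ, hg1, hg2⟩ := hdir β1 β2
            refine ⟨f α γ (htrans h1 hg1) '' sec Bstar γ, ⟨γ, htrans h1 hg1, rfl⟩,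
              Set.subset_inter ?_ ?_⟩
            · rintro u ⟨c, hc, rfl⟩
              exact ⟨f β1 γ hg1 c, hG3 β1 γ hg1 c hc,
                hfcomp α β1 γ h1 hg1 (htrans h1 hg1) c⟩
            · rintro u ⟨c, hc, rfl⟩
              exact ⟨f β2 γ hg2 c, hG3 β2 γ hg2 c hc,
                hfcomp α β2 γ h2 hg2 (htrans h1 hg1) c⟩)
        obtain ⟨β0, h0, rfl⟩ := hMmem
        have heq : sec B' α = f α β0 h0 '' sec Bstar β0 := by
          apply Set.Subset.antisymm
          · rw [hsecB']
            exact fun v hv => Set.mem_iInter.mp (Set.mem_iInter.mp hv β0) h0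
          · rw [hsecB']
            intro v hv
            rw [Set.mem_iInter]
            intro β
            rw [Set.mem_iInter]
            intro h
            exact hMsub _ ⟨β, h, rfl⟩ hv
        rw [heq]
        exact (hG1 β0).map (f α β0 h0)
      · intro α β h v hv
        rw [hsecB'] at hv ⊢
        simp only [Set.mem_iInter] at hv ⊢
        intro δ hδ
        obtain ⟨γ, hg1, hg2⟩ := hdir β δ
        obtain ⟨c, hc, hcv⟩ := hv γ hg1
        rw [← hcv]
        have e1 : f α β h (f β γ hg1 c) = f α δ hδ (f δ γ hg2 c) := by
          rw [hfcomp α β γ h hg1 (htrans h hg1), hfcomp α δ γ hδ hg2 (htrans h hg1)]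
        rw [e1]
        exact ⟨f δ γ hg2 c, hG3 δ γ hg2 c hc, rfl⟩
    have hBeq : Bstar ⊆ B' := hBmin.2 hGoodB' hB'sub
    exact Set.mem_iInter.mp (Set.mem_iInter.mp (hBeq hv) β') h'
  -- the fibres of the minimal family are singletons
  have hsing : ∀ (α0 : ι) (p q : V α0), p ∈ sec Bstar α0 → q ∈ sec Bstar α0 → q = p := by
    intro α0 p q hp hq
    set B'' : Set (Σ α, V α) :=
      {ω | ω.2 ∈ ⋂ (β) (h1 : r β ω.1) (h0 : r β α0),
        f ω.1 β h1 '' (sec Bstar β ∩ f α0 β h0 ⁻¹' {p})} with hB''def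
    have hsecB'' : ∀ α, sec B'' α = ⋂ (β) (h1 : r β α) (h0 : r β α0),
        f α β h1 '' (sec Bstar β ∩ f α0 β h0 ⁻¹' {p}) := fun α => rfl
    have hpiece : ∀ (α β) (h1 : r β α) (h0 : r β α0),
        IsCoset (sec Bstar β ∩ f α0 β h0 ⁻¹' {p}) ∧
          (sec Bstar β ∩ f α0 β h0 ⁻¹' {p}).Nonempty := by
      intro α β h1 h0
      obtain ⟨c, hc, hfc⟩ := hsurj α0 β h0 hp
      have hne : (sec Bstar β ∩ f α0 β h0 ⁻¹' {p}).Nonempty :=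
        ⟨c, hc, by simp [hfc]⟩
      exact ⟨(hG1 β).inter ((IsCoset.singleton p).preimage (f α0 β h0)
        ⟨c, by simp [hfc]⟩) hne, hne⟩
    have hB''sub : B'' ⊆ Bstar := by
      rintro ⟨a, v⟩ hv
      obtain ⟨γ, hg1, hg0⟩ := hdir a α0
      have h1 : v ∈ f a γ hg1 '' (sec Bstar γ ∩ f α0 γ hg0 ⁻¹' {p}) :=
        Set.mem_iInter.mp (Set.mem_iInter.mp (Set.mem_iInter.mp hv γ) hg1) hg0
      obtain ⟨c, ⟨hc, -⟩, rfl⟩ := h1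
      exact hG3 a γ hg1 c hc
    have hGoodB'' : Good B'' := by
      refine ⟨?_, fun α v hv => hG2 α (hB''sub hv), ?_⟩
      · intro α
        obtain ⟨M, hMmem, hMsub⟩ := exists_min_coset
          {S | ∃ (β : ι) (h1 : r β α) (h0 : r β α0),
            S = f α β h1 '' (sec Bstar β ∩ f α0 β h0 ⁻¹' {p})}
          (by obtain ⟨γ, hg1, hg0⟩ := hdir α α0; exact ⟨_, γ, hg1, hg0, rfl⟩)
          (by rintro S ⟨β, h1, h0, rfl⟩; exact ((hpiece α β h1 h0).1).map (f α β h1))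
          (by
            rintro S ⟨β1, h11, h01, rfl⟩ T ⟨β2, h12, h02, rfl⟩
            obtain ⟨γ, hg1, hg2⟩ := hdir β1 β2
            have hγα : r γ α := htrans h11 hg1
            have hγ0 : r γ α0 := htrans h01 hg1
            refine ⟨f α γ hγα '' (sec Bstar γ ∩ f α0 γ hγ0 ⁻¹' {p}), ⟨γ, hγα, hγ0, rfl⟩,
              Set.subset_inter ?_ ?_⟩
            · rintro u ⟨c, ⟨hc, hcp⟩, rfl⟩
              refine ⟨f β1 γ hg1 c, ⟨hG3 β1 γ hg1 c hc, ?_⟩,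
                hfcomp α β1 γ h11 hg1 hγα c⟩
              simp only [Set.mem_preimage, Set.mem_singleton_iff] at hcp ⊢
              rw [hfcomp α0 β1 γ h01 hg1 hγ0 c, hcp]
            · rintro u ⟨c, ⟨hc, hcp⟩, rfl⟩
              refine ⟨f β2 γ hg2 c, ⟨hG3 β2 γ hg2 c hc, ?_⟩,
                hfcomp α β2 γ h12 hg2 hγα c⟩
              simp only [Set.mem_preimage, Set.mem_singleton_iff] at hcp ⊢
              rw [hfcomp α0 β2 γ h02 hg2 hγ0 c, hcp])
        obtain ⟨β0, h10, h00, rfl⟩ := hMmem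
        have heq : sec B'' α = f α β0 h10 '' (sec Bstar β0 ∩ f α0 β0 h00 ⁻¹' {p}) := by
          apply Set.Subset.antisymm
          · rw [hsecB'']
            exact fun v hv =>
              Set.mem_iInter.mp (Set.mem_iInter.mp (Set.mem_iInter.mp hv β0) h10) h00
          · rw [hsecB'']
            intro v hv
            simp only [Set.mem_iInter]
            intro β h1 h0
            exact hMsub _ ⟨β, h1, h0, rfl⟩ hv
        rw [heq]
        exact ((hpiece α β0 h10 h00).1).map (f α β0 h10)
      · intro α β h v hv
        rw [hsecB''] at hv ⊢
        simp only [Set.mem_iInter] at hv ⊢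
        intro δ hδ hδ0
        obtain ⟨γ, hg1, hg2⟩ := hdir β δ
        have hγ0 : r γ α0 := htrans hδ0 hg2
        obtain ⟨c, ⟨hc, hcp⟩, hcv⟩ := hv γ hg1 hγ0
        rw [← hcv]
        have e1 : f α β h (f β γ hg1 c) = f α δ hδ (f δ γ hg2 c) := by
          rw [hfcomp α β γ h hg1 (htrans h hg1), hfcomp α δ γ hδ hg2 (htrans h hg1)]
        rw [e1]
        refine ⟨f δ γ hg2 c, ⟨hG3 δ γ hg2 c hc, ?_⟩, rfl⟩
        simp only [Set.mem_preimage, Set.mem_singleton_iff] at hcp ⊢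
        rw [hfcomp α0 δ γ hδ0 hg2 hγ0 c, hcp]
    have hBeq : Bstar ⊆ B'' := hBmin.2 hGoodB'' hB''sub
    have hq' : q ∈ f α0 α0 (hrefl α0) '' (sec Bstar α0 ∩ f α0 α0 (hrefl α0) ⁻¹' {p}) :=
      Set.mem_iInter.mp (Set.mem_iInter.mp
        (Set.mem_iInter.mp (hBeq hq) α0) (hrefl α0)) (hrefl α0)
    obtain ⟨c, ⟨-, hcp⟩, hcq⟩ := hq'
    simp only [Set.mem_preimage, Set.mem_singleton_iff, hfrefl] at hcp
    rw [← hcq, hfrefl, hcp]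
  have hne : ∀ α, (sec Bstar α).Nonempty := fun α => (hG1 α).nonempty
  choose cfun hc using hne
  exact ⟨cfun, fun α => hG2 α (hc α),
    fun α β h => hsing α (cfun α) (f α β h (cfun β)) (hc α) (hG3 α β h (cfun β) (hc β))⟩

end InvLim


section KeyLimit

variable {L : Type*} [LieRing L] [LieAlgebra ℚ L]

lemma key_limit {ι : Type*} (I : ι → LieIdeal ℚ L)
    (hdir : ∀ α β, ∃ γ, I γ ≤ I α ⊓ I β)
    (hfdq : ∀ α, FiniteDimensional ℚ (L ⧸ I α))
    (hC : IsCompleteWrt I) {n : ℕ} (x_ : Fin n → L) (C : Submodule ℚ L) (x : L)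
    (hA : ∀ α, ∃ z : Fin n → L, (∀ i, z i ∈ C) ∧
      x - ∑ i, ⁅x_ i, z i⁆ ∈ (I α : Submodule ℚ L)) :
    ∃ w : Fin n → L, (∀ i α, ∃ s ∈ C, w i - s ∈ (I α : Submodule ℚ L)) ∧
      ∀ α, x - ∑ i, ⁅x_ i, w i⁆ ∈ (I α : Submodule ℚ L) := by
  classical
  set Φ : (Fin n → L) →ₗ[ℚ] L := bsum L x_ with hΦ
  set K : ι → Submodule ℚ (Fin n → L) :=
    fun α => Submodule.pi Set.univ (fun _ => (I α : Submodule ℚ L)) with hK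
  have hIle : ∀ {α β : ι}, I β ≤ I α → ∀ {a : L},
      a ∈ (I β : Submodule ℚ L) → a ∈ (I α : Submodule ℚ L) := by
    intro α β h a ha
    exact h ha
  have hKle : ∀ {α β : ι}, I β ≤ I α → K β ≤ K α := by
    intro α β h z hz
    simp only [hK, Submodule.mem_pi] at hz ⊢
    exact fun i hi => hIle h (hz i hi)
  haveI hVfd : ∀ α, FiniteDimensional ℚ ((Fin n → L) ⧸ K α) := by
    intro α
    haveI : FiniteDimensional ℚ (L ⧸ (I α : Submodule ℚ L)) := hfdq α
    exact (Submodule.quotientPi (fun _ : Fin n => (I α : Submodule ℚ L))).symm.finiteDimensional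
  set A : ι → Set (Fin n → L) :=
    fun α => {z | (∀ i, z i ∈ C) ∧ x - Φ z ∈ (I α : Submodule ℚ L)} with hAdef
  have hAne : ∀ α, (A α).Nonempty := by
    intro α
    obtain ⟨z, hz1, hz2⟩ := hA α
    exact ⟨z, hz1, hz2⟩
  have hAcoset : ∀ α, IsCoset (A α) := by
    intro α
    obtain ⟨z0, h01, h02⟩ := hAne α
    refine ⟨z0, (Submodule.pi Set.univ fun _ => C) ⊓
      Submodule.comap Φ (I α : Submodule ℚ L), ?_⟩
    ext v
    simp only [hAdef, Set.mem_setOf_eq, Submodule.mem_inf, Submodule.mem_pi, Submodule.mem_comap,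
      Set.mem_univ, forall_true_left, Pi.sub_apply, map_sub]
    constructor
    · rintro ⟨h1, h2⟩
      refine ⟨fun i => Submodule.sub_mem _ (h1 i) (h01 i), ?_⟩
      have he : Φ v - Φ z0 = (x - Φ z0) - (x - Φ v) := by abel
      rw [he]
      exact Submodule.sub_mem _ h02 h2
    · rintro ⟨h1, h2⟩
      constructor
      · intro i
        have := Submodule.add_mem _ (h1 i) (h01 i)
        simpa using this
      · have he : x - Φ v = (x - Φ z0) - (Φ v - Φ z0) := by abel
        rw [he]
        exact Submodule.sub_mem _ h02 h2
  have hAmono : ∀ {α β}, I β ≤ I α → A β ⊆ A α := fun h z hz => ⟨hz.1, hIle h hz.2⟩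
  set mkq : ∀ α, (Fin n → L) →ₗ[ℚ] ((Fin n → L) ⧸ K α) := fun α => (K α).mkQ with hmkq
  set f : ∀ α β, I β ≤ I α → (((Fin n → L) ⧸ K β) →ₗ[ℚ] ((Fin n → L) ⧸ K α)) :=
    fun α β h => Submodule.mapQ (K β) (K α) LinearMap.id
      (by rw [Submodule.comap_id]; exact hKle h) with hf
  have hfmk : ∀ (α β) (h : I β ≤ I α) (z : Fin n → L), f α β h (mkq β z) = mkq α z := by
    intro α β h z
    simp [hf, hmkq, Submodule.mkQ_apply, Submodule.mapQ_apply]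
  have hmksurj : ∀ (α) (c : (Fin n → L) ⧸ K α), ∃ z, mkq α z = c := fun α c =>
    Submodule.mkQ_surjective _ c
  have hfrefl : ∀ (α) (h : I α ≤ I α) c, f α α h c = c := by
    intro α h c; obtain ⟨z, rfl⟩ := hmksurj α c; exact hfmk α α h z
  have hfcomp : ∀ (α β γ) (h1 : I β ≤ I α) (h2 : I γ ≤ I β) (h3 : I γ ≤ I α) (c),
      f α β h1 (f β γ h2 c) = f α γ h3 c := by
    intro α β γ h1 h2 h3 c; obtain ⟨z, rfl⟩ := hmksurj γ c
    rw [hfmk β γ h2, hfmk α β h1, hfmk α γ h3]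
  set Ab : ∀ α, Set ((Fin n → L) ⧸ K α) := fun α => (mkq α) '' (A α) with hAb
  have hAbcoset : ∀ α, IsCoset (Ab α) := fun α => (hAcoset α).map (mkq α)
  have hAbcoh : ∀ (α β) (h : I β ≤ I α), ∀ c ∈ Ab β, f α β h c ∈ Ab α := by
    rintro α β h c ⟨z, hz, rfl⟩
    rw [hfmk α β h]
    exact ⟨z, hAmono h hz, rfl⟩
  obtain ⟨cf, hcf1, hcf2⟩ := invlim_coset (fun β α => I β ≤ I α)
    (fun α => le_refl _) (fun h1 h2 => h2.trans h1)
    (fun α β => by obtain ⟨γ, hγ⟩ := hdir α β; exact ⟨γ, hγ.trans inf_le_left, hγ.trans inf_le_right⟩)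
    f hfrefl hfcomp Ab hAbcoset hAbcoh
  -- choose representatives of the compatible family
  have hrep : ∀ α, ∃ z, z ∈ A α ∧ mkq α z = cf α := by
    intro α
    obtain ⟨z, hz, hz2⟩ := hcf1 α
    exact ⟨z, hz, hz2⟩
  choose zf hzf1 hzf2 using hrep
  have hcoh : ∀ (α β), I β ≤ I α → ∀ i, zf β i - zf α i ∈ (I α : Submodule ℚ L) := by
    intro α β h i
    have h1 : mkq α (zf β) = mkq α (zf α) := by
      rw [← hfmk α β h, hzf2, hzf2]
      exact hcf2 α β h
    have h2 : zf β - zf α ∈ K α := (Submodule.Quotient.eq _).mp h1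
    simp only [hK, Submodule.mem_pi] at h2
    exact h2 i trivial
  have hw : ∀ i, ∃ w : L, ∀ α, w - zf α i ∈ (I α : Submodule ℚ L) := by
    intro i
    exact hC (fun α => zf α i) (fun α β h => hcoh α β h i)
  choose w hwc using hw
  refine ⟨w, ?_, ?_⟩
  · intro i α
    exact ⟨zf α i, (hzf1 α).1 i, hwc i α⟩
  · intro α
    have h1 : x - Φ (zf α) ∈ (I α : Submodule ℚ L) := (hzf1 α).2
    have h2 : Φ (zf α) - Φ w ∈ (I α : Submodule ℚ L) := by
      have he : Φ (zf α) - Φ w = ∑ i, ⁅x_ i, zf α i - w i⁆ := by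
        rw [← map_sub]
        show (∑ i, ⁅x_ i, (zf α - w) i⁆) = _
        exact Finset.sum_congr rfl fun i _ => rfl
      rw [he]
      refine Submodule.sum_mem _ fun i _ => ?_
      have hm : zf α i - w i ∈ I α := by
        have := Submodule.neg_mem _ (hwc i α)
        rw [neg_sub] at this
        exact this
      exact lie_mem_right ℚ L (I α) (x_ i) _ hm
    have he2 : x - ∑ i, ⁅x_ i, w i⁆ = (x - Φ (zf α)) + (Φ (zf α) - Φ w) := by
      show x - Φ w = _
      abel
    rw [he2]
    exact Submodule.add_mem _ h1 h2

end KeyLimit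


/-- If `L` is a complete enriched Lie algebra with `L/L^{(2)}`
finite-dimensional, then the lower central series and the closed lower central series
coincide: `L^k = L^{(k)}` for all `k ≥ 1`; in particular `L^{(k)} ⊆ [L, L^{(k-1)}]`. -/
theorem stmt14 {ι L : Type*} [LieRing L] [LieAlgebra ℚ L]
    (I : ι → LieIdeal ℚ L) (hE : IsEnriched I) (hC : IsCompleteWrt I)
    (hfd : FiniteDimensional ℚ (L ⧸ encl I (lcsIn (⊤ : Submodule ℚ L) 1))) :
    (∀ m : ℕ, lcsIn (⊤ : Submodule ℚ L) m = encl I (lcsIn (⊤ : Submodule ℚ L) m)) ∧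
    (∀ m : ℕ, encl I (lcsIn (⊤ : Submodule ℚ L) (m + 1)) ≤
      Submodule.span ℚ
        {z : L | ∃ x : L, ∃ y ∈ encl I (lcsIn (⊤ : Submodule ℚ L) m), ⁅x, y⁆ = z}) := by
  classical
  obtain ⟨hdir, hfdq, hnil, hinf⟩ := hE
  set Q1 : Submodule ℚ L := encl I (lcsIn (⊤ : Submodule ℚ L) 1) with hQ1def
  -- choose a finite spanning set of `L` modulo `Q1`
  obtain ⟨n, sfam, hsfam⟩ := Module.Finite.exists_fin (R := ℚ) (M := L ⧸ Q1)
  have hlift : ∀ i, ∃ xi : L, Submodule.Quotient.mk xi = sfam i := fun i =>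
    Submodule.Quotient.mk_surjective _ (sfam i)
  choose x_ hx_ using hlift
  have hxspan : ∀ u : L, ∃ c : Fin n → ℚ, u - ∑ i, c i • x_ i ∈ Q1 := by
    intro u
    have hmem : (Submodule.Quotient.mk u : L ⧸ Q1) ∈
        Submodule.span ℚ (Set.range sfam) := by rw [hsfam]; trivial
    rw [Submodule.mem_span_range_iff_exists_fun] at hmem
    obtain ⟨c, hc⟩ := hmem
    refine ⟨c, ?_⟩
    rw [← Submodule.Quotient.mk_eq_zero]
    have : (Submodule.Quotient.mk (u - ∑ i, c i • x_ i) : L ⧸ Q1) =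
        Submodule.Quotient.mk u - ∑ i, c i • (Submodule.Quotient.mk (x_ i) : L ⧸ Q1) := by
      rw [Submodule.Quotient.mk_sub]
      congr 1
      have := map_sum Q1.mkQ (fun i => c i • x_ i) Finset.univ
      simp only [Submodule.mkQ_apply, map_smul] at this
      exact this
    rw [this]
    simp only [hx_]
    rw [hc]
    simp
  -- basic facts about `encl`
  have hsubset_encl : ∀ S : Submodule ℚ L, S ≤ encl I S := by
    intro S s hs α
    exact ⟨s, hs, by simp⟩
  have hinf_mem : ∀ a : L, (∀ α, a ∈ (I α : Submodule ℚ L)) → a = 0 := by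
    intro a ha
    have : a ∈ ⨅ α, I α := by
      rw [LieSubmodule.mem_iInf]
      exact fun α => ha α
    rw [hinf] at this
    simpa using this
  -- the key step
  have hkey : ∀ m : ℕ, ∀ x ∈ encl I (lcsIn (⊤ : Submodule ℚ L) (m + 1)),
      ∃ w : Fin n → L, (∀ i, w i ∈ encl I (lcsIn (⊤ : Submodule ℚ L) m)) ∧
        x = ∑ i, ⁅x_ i, w i⁆ := by
    intro m x hx
    have hA : ∀ α, ∃ z : Fin n → L, (∀ i, z i ∈ lcsIn (⊤ : Submodule ℚ L) m) ∧
        x - ∑ i, ⁅x_ i, z i⁆ ∈ (I α : Submodule ℚ L) := by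
      intro α
      obtain ⟨s, hs, hxs⟩ := hx α
      haveI := hnil α
      obtain ⟨z, hz, hsz⟩ := exists_bracket_approx x_ (I α) Q1
        (fun q hq => by
          obtain ⟨t, ht, hqt⟩ := hq α
          exact ⟨t, ht, hqt⟩)
        hxspan m hs
      refine ⟨z, hz, ?_⟩
      have he : x - ∑ i, ⁅x_ i, z i⁆ = (x - s) + (s - ∑ i, ⁅x_ i, z i⁆) := by abel
      rw [he]
      exact Submodule.add_mem _ hxs hsz
    obtain ⟨w, hw1, hw2⟩ := key_limit I hdir hfdq hC x_ (lcsIn (⊤ : Submodule ℚ L) m) x hA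
    refine ⟨w, fun i α => hw1 i α, ?_⟩
    have h0 := hinf_mem _ (fun α => hw2 α)
    have := sub_eq_zero.mp h0
    exact this
  -- part 1 by induction
  have hpart1 : ∀ m : ℕ, lcsIn (⊤ : Submodule ℚ L) m = encl I (lcsIn (⊤ : Submodule ℚ L) m) := by
    intro m
    induction m with
    | zero =>
      apply le_antisymm (hsubset_encl _)
      intro a _
      trivial
    | succ m ih =>
      apply le_antisymm (hsubset_encl _)
      intro x hx
      obtain ⟨w, hw1, hw2⟩ := hkey m x hx
      rw [hw2]
      refine Submodule.sum_mem _ fun i _ => ?_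
      have hwi : w i ∈ lcsIn (⊤ : Submodule ℚ L) m := by rw [ih]; exact hw1 i
      exact lie_mem_lcsIn_succ hwi
  refine ⟨hpart1, ?_⟩
  intro m x hx
  obtain ⟨w, hw1, hw2⟩ := hkey m x hx
  rw [hw2]
  refine Submodule.sum_mem _ fun i _ => ?_
  exact Submodule.subset_span ⟨x_ i, w i, hw1 i, rfl⟩
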